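/- Complete additivity of an operator on a BAO is equivalent to the first-order condition 𝓡: an operator ◇ on a Boolean algebra is completely additive if and only if for all a, b, whenever a ∧ ◇b ≠ ⊥, there exists c with ⊥ ≠ c ≤ b such that a ∧ ◇d ≠ ⊥ for all d with ⊥ ≠ d ≤ c. -/
import Mathlib


/-- Complete additivity of an operator on a BAO is equivalent to the
first-order condition 𝓡. -/
theorem stmt_3 {α : Type*} [BooleanAlgebra α] (f : α → α)
    (hjoin : ∀ x y : α, f (x ⊔ y) = f x ⊔ f y) (hbot : f ⊥ = ⊥) :
    (∀ (X : Set α) (s : α), IsLUB X s → IsLUB (f '' X) (f s)) ↔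
    (∀ a b : α, a ⊓ f b ≠ ⊥ →
      ∃ c, c ≠ ⊥ ∧ c ≤ b ∧ ∀ d, d ≠ ⊥ → d ≤ c → a ⊓ f d ≠ ⊥) := by
  have hmono : ∀ x y : α, x ≤ y → f x ≤ f y := by
    intro x y h
    have : f y = f x ⊔ f y := by rw [← hjoin, sup_eq_right.mpr h]
    rw [this]; exact le_sup_left
  constructor
  · intro hV a b hab
    by_contra hR
    push_neg at hR
    set X : Set α := {d | d ≤ b ∧ a ⊓ f d = ⊥} with hX
    have hlub : IsLUB X b := by
      constructor
      · intro d hd; exact hd.1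
      · intro u hu
        by_contra hbu
        have hc : b ⊓ uᶜ ≠ ⊥ := by
          intro h
          exact hbu (sdiff_eq_bot_iff.mp (by rwa [sdiff_eq]))
        obtain ⟨d, hd0, hdc, hadf⟩ := hR (b ⊓ uᶜ) hc inf_le_left
        have hdX : d ∈ X := ⟨hdc.trans inf_le_left, hadf⟩
        have hdu : d ≤ u := hu hdX
        have : d ≤ u ⊓ uᶜ := le_inf hdu (hdc.trans inf_le_right)
        rw [inf_compl_eq_bot] at this
        exact hd0 (le_bot_iff.mp this)
    have := hV X b hlub
    have hub : aᶜ ∈ upperBounds (f '' X) := by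
      rintro _ ⟨d, hd, rfl⟩
      exact le_compl_iff_disjoint_left.mpr (disjoint_iff.mpr hd.2)
    have : f b ≤ aᶜ := this.2 hub
    exact hab (disjoint_iff.mp (le_compl_iff_disjoint_left.mp this))
  · intro hR X s hlub
    constructor
    · rintro _ ⟨x, hx, rfl⟩
      exact hmono x s (hlub.1 hx)
    · intro u hu
      by_contra hfsu
      have ha : uᶜ ⊓ f s ≠ ⊥ := by
        intro h
        rw [inf_comm] at h
        exact hfsu (sdiff_eq_bot_iff.mp (by rwa [sdiff_eq]))
      obtain ⟨c, hc0, hcs, hcd⟩ := hR uᶜ s ha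
      have hcub : cᶜ ∈ upperBounds X := by
        intro x hx
        by_contra hxc
        have hcx : c ⊓ x ≠ ⊥ := by
          intro h
          exact hxc (le_compl_iff_disjoint_left.mpr (disjoint_iff.mpr h))
        have := hcd (c ⊓ x) hcx inf_le_left
        apply this
        have hfx : f (c ⊓ x) ≤ u := (hmono _ x inf_le_right).trans (hu ⟨x, hx, rfl⟩)
        have : uᶜ ⊓ f (c ⊓ x) ≤ uᶜ ⊓ u := inf_le_inf_left _ hfx
        rw [compl_inf_eq_bot] at this
        exact le_bot_iff.mp this
      have : c ≤ cᶜ := hcs.trans (hlub.2 hcub)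
      exact hc0 (le_bot_iff.mp (by simpa using le_inf le_rfl this))
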